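/- Let K be a clarified finite formal context and S₁ = [H₁,N₁], S₂ = [H₂,N₂] two distinct subcontexts of K, both isomorphic to the contranominal scale N^c(k). If H₁ ≠ H₂ then φ₁(S₁) ≠ φ₁(S₂), and if N₁ ≠ N₂ then φ₂(S₁) ≠ φ₂(S₂). -/

import Mathlib

variable {G M : Type*} [Fintype G] [Fintype M]

/-- Attribute derivation A' of an object set A w.r.t. incidence I. -/
def fcaExtDeriv (I : Set (G × M)) (A : Set G) : Set M := {m | ∀ g ∈ A, (g, m) ∈ I}

/-- Object derivation B' of an attribute set B w.r.t. incidence I. -/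
def intDeriv (I : Set (G × M)) (B : Set M) : Set G := {g | ∀ m ∈ B, (g, m) ∈ I}

/-- (A,B) is a formal concept of (G,M,I). -/
def IsConcept (I : Set (G × M)) (A : Set G) (B : Set M) : Prop :=
  fcaExtDeriv I A = B ∧ intDeriv I B = A

/-- Derivation of an object set inside the (sub)context (H,N,J). -/
def subExtDeriv (N : Set M) (J : Set (G × M)) (A : Set G) : Set M :=
  {n ∈ N | ∀ g ∈ A, (g, n) ∈ J}

/-- Derivation of an attribute set inside the (sub)context (H,N,J). -/
def subIntDeriv (H : Set G) (J : Set (G × M)) (B : Set M) : Set G :=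
  {h ∈ H | ∀ n ∈ B, (h, n) ∈ J}

/-- (A,B) is a formal concept of the context (H,N,J). -/
def IsSubConcept (H : Set G) (N : Set M) (J : Set (G × M)) (A : Set G) (B : Set M) : Prop :=
  A ⊆ H ∧ B ⊆ N ∧ subExtDeriv N J A = B ∧ subIntDeriv H J B = A

/-- (H,N,J) is a closed-subcontext of (G,M,I). -/
def IsClosedSubcontext (I : Set (G × M)) (H : Set G) (N : Set M) (J : Set (G × M)) : Prop :=
  J ⊆ I ∩ H ×ˢ N ∧ ∀ A B, IsSubConcept H N J A B → IsConcept I A B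

/-- Binary join in the concept lattice of (G,M,I). -/
def conceptJoin (I : Set (G × M)) (c d : Set G × Set M) : Set G × Set M :=
  (intDeriv I (c.2 ∩ d.2), c.2 ∩ d.2)

/-- Binary meet in the concept lattice of (G,M,I). -/
def conceptMeet (I : Set (G × M)) (c d : Set G × Set M) : Set G × Set M :=
  (c.1 ∩ d.1, fcaExtDeriv I (c.1 ∩ d.1))

/-- S is a sublattice of the concept lattice of (G,M,I). -/
def IsConceptSublattice (I : Set (G × M)) (S : Set (Set G × Set M)) : Prop :=
  S.Nonempty ∧ (∀ c ∈ S, IsConcept I c.1 c.2) ∧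
    ∀ c ∈ S, ∀ d ∈ S, conceptJoin I c d ∈ S ∧ conceptMeet I c d ∈ S

/-- Image of the concept set of the subcontext [H,N] under φ₁(A,B)=(A'',A'). -/
def phi1Image (I : Set (G × M)) (H : Set G) (N : Set M) : Set (Set G × Set M) :=
  {c | ∃ A B, IsSubConcept H N (I ∩ H ×ˢ N) A B ∧
      c = (intDeriv I (fcaExtDeriv I A), fcaExtDeriv I A)}

/-- Image of the concept set of the subcontext [H,N] under φ₂(A,B)=(B',B''). -/
def phi2Image (I : Set (G × M)) (H : Set G) (N : Set M) : Set (Set G × Set M) :=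
  {c | ∃ A B, IsSubConcept H N (I ∩ H ×ˢ N) A B ∧
      c = (intDeriv I B, fcaExtDeriv I (intDeriv I B))}

/-- [H,N] is (isomorphic to) a contranominal scale of dimension k in (G,M,I). -/
def IsContranominal (I : Set (G × M)) (k : ℕ) (H : Set G) (N : Set M) : Prop :=
  ∃ f : Fin k → G, ∃ g : Fin k → M, Function.Injective f ∧ Function.Injective g ∧
    H = Set.range f ∧ N = Set.range g ∧ ∀ i j, (f i, g j) ∈ I ↔ i ≠ j

/-- O is a minimal object generator of the concept with extent A. -/
def IsMinObjGen (I : Set (G × M)) (A : Set G) (O : Set G) : Prop :=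
  intDeriv I (fcaExtDeriv I O) = A ∧ ∀ P ⊂ O, intDeriv I (fcaExtDeriv I P) ≠ A

/-- Q is a minimal attribute generator of the concept with intent B. -/
def IsMinAttGen (I : Set (G × M)) (B : Set M) (Q : Set M) : Prop :=
  fcaExtDeriv I (intDeriv I Q) = B ∧ ∀ P ⊂ Q, fcaExtDeriv I (intDeriv I P) ≠ B

/-- Union of all minimal object generators of the atoms of a Boolean suborder
given by an order embedding f of the powerset of Fin k. -/
def genH (I : Set (G × M)) {k : ℕ} (f : Set (Fin k) → Set G × Set M) : Set G :=
  {g | ∃ i : Fin k, ∃ O : Set G, IsMinObjGen I (f {i}).1 O ∧ g ∈ O}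

/-- Union of all minimal attribute generators of the coatoms of a Boolean suborder. -/
def genN (I : Set (G × M)) {k : ℕ} (f : Set (Fin k) → Set G × Set M) : Set M :=
  {m | ∃ i : Fin k, ∃ Q : Set M, IsMinAttGen I (f {i}ᶜ).2 Q ∧ m ∈ Q}

lemma extDeriv_anti (I : Set (G × M)) {A B : Set G} (h : A ⊆ B) :
    fcaExtDeriv I B ⊆ fcaExtDeriv I A := fun m hm g hg => hm g (h hg)

lemma intDeriv_anti (I : Set (G × M)) {A B : Set M} (h : A ⊆ B) :
    intDeriv I B ⊆ intDeriv I A := fun g hg m hm => hg m (h hm)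

lemma extDeriv_empty (I : Set (G × M)) : fcaExtDeriv I (∅ : Set G) = Set.univ := by
  ext m; simp [fcaExtDeriv]

lemma intDeriv_empty (I : Set (G × M)) : intDeriv I (∅ : Set M) = Set.univ := by
  ext g; simp [intDeriv]

lemma contra_singleton_ext {I : Set (G × M)} {k : ℕ} {f : Fin k → G} {gm : Fin k → M}
    (hf : Function.Injective f) (hgm : Function.Injective gm)
    (hI : ∀ i j, (f i, gm j) ∈ I ↔ i ≠ j) (i : Fin k) :
    IsSubConcept (Set.range f) (Set.range gm) (I ∩ (Set.range f) ×ˢ (Set.range gm))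
      {f i} (Set.range gm \ {gm i}) := by
  have hJ : ∀ l j, (f l, gm j) ∈ I ∩ (Set.range f) ×ˢ (Set.range gm) ↔ l ≠ j := by
    intro l j
    constructor
    · intro h; exact (hI l j).1 h.1
    · intro h; exact ⟨(hI l j).2 h, ⟨l, rfl⟩, ⟨j, rfl⟩⟩
  refine ⟨by simp, Set.diff_subset, ?_, ?_⟩
  · ext n
    constructor
    · rintro ⟨⟨j, rfl⟩, h2⟩
      refine ⟨⟨j, rfl⟩, fun hj => ?_⟩
      exact (hJ i j).1 (h2 (f i) rfl) (hgm hj).symm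
    · rintro ⟨⟨j, rfl⟩, hj⟩
      refine ⟨⟨j, rfl⟩, ?_⟩
      rintro x rfl
      exact (hJ i j).2 (fun h => hj (by rw [h]; rfl))
  · ext x
    constructor
    · rintro ⟨⟨l, rfl⟩, h2⟩
      by_contra hne
      have hli : l ≠ i := fun h => hne (by rw [h]; rfl)
      have hmem : gm l ∈ Set.range gm \ {gm i} := ⟨⟨l, rfl⟩, fun h => hli (hgm h)⟩
      exact (hJ l l).1 (h2 (gm l) hmem) rfl
    · rintro rfl
      refine ⟨⟨i, rfl⟩, ?_⟩
      rintro n ⟨⟨j, rfl⟩, hj⟩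
      exact (hJ i j).2 (fun h => hj (by rw [h]; rfl))

lemma contra_singleton_int {I : Set (G × M)} {k : ℕ} {f : Fin k → G} {gm : Fin k → M}
    (hf : Function.Injective f) (hgm : Function.Injective gm)
    (hI : ∀ i j, (f i, gm j) ∈ I ↔ i ≠ j) (i : Fin k) :
    IsSubConcept (Set.range f) (Set.range gm) (I ∩ (Set.range f) ×ˢ (Set.range gm))
      (Set.range f \ {f i}) {gm i} := by
  have hJ : ∀ l j, (f l, gm j) ∈ I ∩ (Set.range f) ×ˢ (Set.range gm) ↔ l ≠ j := by
    intro l j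
    constructor
    · intro h; exact (hI l j).1 h.1
    · intro h; exact ⟨(hI l j).2 h, ⟨l, rfl⟩, ⟨j, rfl⟩⟩
  refine ⟨Set.diff_subset, by simp, ?_, ?_⟩
  · ext n
    constructor
    · rintro ⟨⟨j, rfl⟩, h2⟩
      show gm j = gm i
      by_contra hne
      have hji : j ≠ i := fun h => hne (by rw [h])
      have hmem : f j ∈ Set.range f \ {f i} := ⟨⟨j, rfl⟩, fun h => hji (hf h)⟩
      exact (hJ j j).1 (h2 (f j) hmem) rfl
    · rintro rfl
      refine ⟨⟨i, rfl⟩, ?_⟩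
      rintro x ⟨⟨l, rfl⟩, hl⟩
      exact (hJ l i).2 (fun h => hl (by rw [h]; rfl))
  · ext x
    constructor
    · rintro ⟨⟨l, rfl⟩, h2⟩
      refine ⟨⟨l, rfl⟩, fun hl => ?_⟩
      exact (hJ l i).1 (h2 (gm i) rfl) (hf hl)
    · rintro ⟨⟨l, rfl⟩, hl⟩
      refine ⟨⟨l, rfl⟩, ?_⟩
      rintro n rfl
      exact (hJ l i).2 (fun h => hl (by rw [h]; rfl))

lemma phi1_mono {I : Set (G × M)} {k : ℕ}
    (hclar₁ : ∀ g h : G, fcaExtDeriv I {g} = fcaExtDeriv I {h} → g = h)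
    {H₁ H₂ : Set G} {N₁ N₂ : Set M}
    (h1 : IsContranominal I k H₁ N₁) (h2 : IsContranominal I k H₂ N₂)
    (heq : phi1Image I H₁ N₁ = phi1Image I H₂ N₂) : H₁ ⊆ H₂ := by
  obtain ⟨f₁, g₁, hf₁, hg₁, rfl, rfl, hI₁⟩ := h1
  obtain ⟨f₂, g₂, hf₂, hg₂, rfl, rfl, hI₂⟩ := h2
  rintro x ⟨i, rfl⟩
  have hmem : (intDeriv I (fcaExtDeriv I {f₁ i}), fcaExtDeriv I {f₁ i}) ∈
      phi1Image I (Set.range f₁) (Set.range g₁) :=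
    ⟨{f₁ i}, _, contra_singleton_ext hf₁ hg₁ hI₁ i, rfl⟩
  rw [heq] at hmem
  obtain ⟨A, B, hsub, hpair⟩ := hmem
  have hA2 : A ⊆ Set.range f₂ := hsub.1
  have hAeq : fcaExtDeriv I {f₁ i} = fcaExtDeriv I A := congrArg Prod.snd hpair
  have hAne : A.Nonempty := by
    rcases Set.eq_empty_or_nonempty A with h | h
    · exfalso
      have hgi : g₁ i ∈ fcaExtDeriv I {f₁ i} := by
        rw [hAeq, h, extDeriv_empty]; trivial
      exact (hI₁ i i).1 (hgi (f₁ i) rfl) rfl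
    · exact h
  obtain ⟨x, hxA⟩ := hAne
  obtain ⟨a, rfl⟩ := hA2 hxA
  have hsingle : ∀ y ∈ A, y = f₂ a := by
    intro y hy
    obtain ⟨b, rfl⟩ := hA2 hy
    by_contra hba'
    have hba : b ≠ a := fun h => hba' (by rw [h])
    have hmem2 : (intDeriv I (fcaExtDeriv I {f₂ a}), fcaExtDeriv I {f₂ a}) ∈
        phi1Image I (Set.range f₁) (Set.range g₁) := by
      rw [heq]
      exact ⟨{f₂ a}, _, contra_singleton_ext hf₂ hg₂ hI₂ a, rfl⟩
    obtain ⟨C, D, hsubC, hpairC⟩ := hmem2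
    have hC1 : C ⊆ Set.range f₁ := hsubC.1
    have hCeq : fcaExtDeriv I {f₂ a} = fcaExtDeriv I C := congrArg Prod.snd hpairC
    have hsub' : ({f₂ a} : Set G) ⊆ A := by
      rintro w rfl; exact hxA
    have hCsub : ∀ z ∈ C, z = f₁ i := by
      intro z hz
      obtain ⟨l, rfl⟩ := hC1 hz
      by_contra hli'
      have hli : i ≠ l := fun h => hli' (by rw [h])
      have hgl : g₁ l ∈ fcaExtDeriv I A := by
        rw [← hAeq]
        rintro g rfl
        exact (hI₁ i l).2 hli
      have hgl2 : g₁ l ∈ fcaExtDeriv I C := by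
        rw [← hCeq]; exact extDeriv_anti I hsub' hgl
      exact (hI₁ l l).1 (hgl2 (f₁ l) hz) rfl
    have hb1 : g₂ b ∈ fcaExtDeriv I C := by
      rw [← hCeq]
      rintro g rfl
      exact (hI₂ a b).2 (fun h => hba h.symm)
    have hb2 : g₂ b ∉ fcaExtDeriv I A := fun h => (hI₂ b b).1 (h (f₂ b) hy) rfl
    rcases Set.eq_empty_or_nonempty C with hC | ⟨z, hzC⟩
    · have hga : g₂ a ∈ fcaExtDeriv I {f₂ a} := by rw [hCeq, hC, extDeriv_empty]; trivial
      exact (hI₂ a a).1 (hga (f₂ a) rfl) rfl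
    · have hz' : z = f₁ i := hCsub z hzC
      have hfinal : g₂ b ∈ fcaExtDeriv I {f₁ i} := by
        rintro g rfl
        rw [← hz']
        exact hb1 z hzC
      rw [hAeq] at hfinal
      exact hb2 hfinal
  have hAs : A = {f₂ a} := Set.eq_singleton_iff_unique_mem.2 ⟨hxA, hsingle⟩
  have hfa : f₁ i = f₂ a := hclar₁ _ _ (by rw [hAeq, hAs])
  exact ⟨a, hfa.symm⟩

lemma phi2_mono {I : Set (G × M)} {k : ℕ}
    (hclar₂ : ∀ m n : M, intDeriv I {m} = intDeriv I {n} → m = n)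
    {H₁ H₂ : Set G} {N₁ N₂ : Set M}
    (h1 : IsContranominal I k H₁ N₁) (h2 : IsContranominal I k H₂ N₂)
    (heq : phi2Image I H₁ N₁ = phi2Image I H₂ N₂) : N₁ ⊆ N₂ := by
  obtain ⟨f₁, g₁, hf₁, hg₁, rfl, rfl, hI₁⟩ := h1
  obtain ⟨f₂, g₂, hf₂, hg₂, rfl, rfl, hI₂⟩ := h2
  rintro x ⟨i, rfl⟩
  have hmem : (intDeriv I {g₁ i}, fcaExtDeriv I (intDeriv I {g₁ i})) ∈
      phi2Image I (Set.range f₁) (Set.range g₁) :=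
    ⟨_, {g₁ i}, contra_singleton_int hf₁ hg₁ hI₁ i, rfl⟩
  rw [heq] at hmem
  obtain ⟨A, B, hsub, hpair⟩ := hmem
  have hB2 : B ⊆ Set.range g₂ := hsub.2.1
  have hBeq : intDeriv I {g₁ i} = intDeriv I B := congrArg Prod.fst hpair
  have hBne : B.Nonempty := by
    rcases Set.eq_empty_or_nonempty B with h | h
    · exfalso
      have hfi : f₁ i ∈ intDeriv I {g₁ i} := by
        rw [hBeq, h, intDeriv_empty]; trivial
      exact (hI₁ i i).1 (hfi (g₁ i) rfl) rfl
    · exact h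
  obtain ⟨x, hxB⟩ := hBne
  obtain ⟨a, rfl⟩ := hB2 hxB
  have hsingle : ∀ y ∈ B, y = g₂ a := by
    intro y hy
    obtain ⟨b, rfl⟩ := hB2 hy
    by_contra hba'
    have hba : b ≠ a := fun h => hba' (by rw [h])
    have hmem2 : (intDeriv I {g₂ a}, fcaExtDeriv I (intDeriv I {g₂ a})) ∈
        phi2Image I (Set.range f₁) (Set.range g₁) := by
      rw [heq]
      exact ⟨_, {g₂ a}, contra_singleton_int hf₂ hg₂ hI₂ a, rfl⟩
    obtain ⟨C, D, hsubD, hpairD⟩ := hmem2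
    have hD1 : D ⊆ Set.range g₁ := hsubD.2.1
    have hDeq : intDeriv I {g₂ a} = intDeriv I D := congrArg Prod.fst hpairD
    have hsub' : ({g₂ a} : Set M) ⊆ B := by
      rintro w rfl; exact hxB
    have hDsub : ∀ z ∈ D, z = g₁ i := by
      intro z hz
      obtain ⟨l, rfl⟩ := hD1 hz
      by_contra hli'
      have hli : l ≠ i := fun h => hli' (by rw [h])
      have hfl : f₁ l ∈ intDeriv I B := by
        rw [← hBeq]
        rintro m rfl
        exact (hI₁ l i).2 hli
      have hfl2 : f₁ l ∈ intDeriv I D := by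
        rw [← hDeq]; exact intDeriv_anti I hsub' hfl
      exact (hI₁ l l).1 (hfl2 (g₁ l) hz) rfl
    have hb1 : f₂ b ∈ intDeriv I D := by
      rw [← hDeq]
      rintro m rfl
      exact (hI₂ b a).2 hba
    have hb2 : f₂ b ∉ intDeriv I B := fun h => (hI₂ b b).1 (h (g₂ b) hy) rfl
    rcases Set.eq_empty_or_nonempty D with hD | ⟨z, hzD⟩
    · have hfa : f₂ a ∈ intDeriv I {g₂ a} := by rw [hDeq, hD, intDeriv_empty]; trivial
      exact (hI₂ a a).1 (hfa (g₂ a) rfl) rfl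
    · have hz' : z = g₁ i := hDsub z hzD
      have hfinal : f₂ b ∈ intDeriv I {g₁ i} := by
        rintro m rfl
        rw [← hz']
        exact hb1 z hzD
      rw [hBeq] at hfinal
      exact hb2 hfinal
  have hBs : B = {g₂ a} := Set.eq_singleton_iff_unique_mem.2 ⟨hxB, hsingle⟩
  have hga : g₁ i = g₂ a := hclar₂ _ _ (by rw [hBeq, hBs])
  exact ⟨a, hga.symm⟩

theorem stmt16 (I : Set (G × M)) (k : ℕ)
    (hclar₁ : ∀ g h : G, fcaExtDeriv I {g} = fcaExtDeriv I {h} → g = h)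
    (hclar₂ : ∀ m n : M, intDeriv I {m} = intDeriv I {n} → m = n)
    (H₁ H₂ : Set G) (N₁ N₂ : Set M)
    (h1 : IsContranominal I k H₁ N₁) (h2 : IsContranominal I k H₂ N₂)
    (hne : (H₁, N₁) ≠ (H₂, N₂)) :
    (H₁ ≠ H₂ → phi1Image I H₁ N₁ ≠ phi1Image I H₂ N₂) ∧
    (N₁ ≠ N₂ → phi2Image I H₁ N₁ ≠ phi2Image I H₂ N₂) := by
  constructor
  · intro hH heq
    exact hH (Set.Subset.antisymm (phi1_mono hclar₁ h1 h2 heq)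
      (phi1_mono hclar₁ h2 h1 heq.symm))
  · intro hN heq
    exact hN (Set.Subset.antisymm (phi2_mono hclar₂ h1 h2 heq)
      (phi2_mono hclar₂ h2 h1 heq.symm))
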